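/- Let ℓ ≥ 6 be an integer, fix m ≥ 3, and let λ, μ ∈ Γ(ℓ) be Young diagrams such that m − |λ| and m − |μ| are nonnegative even integers. If λ ≠ μ, then P(m,λ) ≠ P(m,μ), where P(m,λ) := {ν ∈ Γ(ℓ) : ν ↔ λ and (m−1) − |ν| is a nonnegative even integer}. -/

import Mathlib

/-- `AddBox μ ν` means `ν` is obtained from `μ` by adding a single box (`μ → ν`). -/
def AddBox (μ ν : YoungDiagram) : Prop := μ ≤ ν ∧ ν.card = μ.card + 1

/-- `AdjBox μ ν` means `μ ↔ ν`, i.e. the diagrams differ by a single box. -/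
def AdjBox (μ ν : YoungDiagram) : Prop := AddBox μ ν ∨ AddBox ν μ

/-- `RowsEq μ L` means the row lengths of `μ` are given by the list `L`
(rows beyond the length of `L` being empty). -/
def RowsEq (μ : YoungDiagram) (L : List ℕ) : Prop := ∀ i, μ.rowLen i = L.getD i 0

/-- `Λ(j,ℓ)`: Young diagrams of size `j` with at most two rows whose
row difference is at most `ℓ - 2`. -/
def LambdaSet (j ℓ : ℕ) : Set YoungDiagram :=
  {μ | μ.card = j ∧ μ.rowLen 2 = 0 ∧ μ.rowLen 0 - μ.rowLen 1 ≤ ℓ - 2}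

/-- `Γ(ℓ)` for a finite `ℓ ≥ 6`. -/
def GammaSet (ℓ : ℕ) : Set YoungDiagram :=
  {μ | μ.colLen 0 + μ.colLen 1 ≤ 4 ∧ μ.rowLen 0 + μ.rowLen 1 ≤ ℓ - 2}
    ∪ {μ | RowsEq μ [ℓ - 2, 1, 1]}

/-- `Γ(∞)`: diagrams whose first two column lengths sum to at most `4`. -/
def GammaInf : Set YoungDiagram := {μ | μ.colLen 0 + μ.colLen 1 ≤ 4}

/-- A Young-tableau path of length `m`, with the `j`-th shape restricted to lie in `P j`. -/
def IsTabPath (P : ℕ → Set YoungDiagram) (m : ℕ) (f : Fin (m + 1) → YoungDiagram) : Prop :=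
  f 0 = ⊥ ∧ (∀ j : Fin m, AddBox (f j.castSucc) (f j.succ)) ∧
    ∀ j : Fin (m + 1), f j ∈ P (j : ℕ)

/-- An oscillating-tableau path of length `m` with all shapes in `Γ`. -/
def IsOscPath (Γ : Set YoungDiagram) (m : ℕ) (f : Fin (m + 1) → YoungDiagram) : Prop :=
  f 0 = ⊥ ∧ (∀ j : Fin m, AdjBox (f j.castSucc) (f j.succ)) ∧
    ∀ j : Fin (m + 1), f j ∈ Γ

/-- The number of Young tableaux (paths) of length `m`, with shapes restricted by `P`,
whose final shape has row lengths `L`. -/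
noncomputable def tabCount (P : ℕ → Set YoungDiagram) (m : ℕ) (L : List ℕ) : ℕ :=
  Nat.card {f : Fin (m + 1) → YoungDiagram //
    IsTabPath P m f ∧ RowsEq (f (Fin.last m)) L}

/-- The number of oscillating tableaux of length `m` with shapes in `Γ`
whose final shape has row lengths `L`. -/
noncomputable def oscCount (Γ : Set YoungDiagram) (m : ℕ) (L : List ℕ) : ℕ :=
  Nat.card {f : Fin (m + 1) → YoungDiagram //
    IsOscPath Γ m f ∧ RowsEq (f (Fin.last m)) L}

/-- The number of oscillating tableaux of length `m` with shapes in `Γ` and final shape `ν`. -/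
noncomputable def oscCountD (Γ : Set YoungDiagram) (m : ℕ) (ν : YoungDiagram) : ℕ :=
  Nat.card {f : Fin (m + 1) → YoungDiagram //
    IsOscPath Γ m f ∧ f (Fin.last m) = ν}

/-- The set `P(m,λ)` of level-`m-1` predecessors of `λ` in `Γ(ℓ)`. -/
def PredSet (ℓ m : ℕ) (l : YoungDiagram) : Set YoungDiagram :=
  {ν | ν ∈ GammaSet ℓ ∧ AdjBox ν l ∧ ν.card ≤ m - 1 ∧ Even (m - 1 - ν.card)}

section Helpers
open YoungDiagram

section Infra
-- (infra lemmas, assumed OK)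
lemma rowLen_mono {ν μ : YoungDiagram} (h : ν ≤ μ) (i : ℕ) : ν.rowLen i ≤ μ.rowLen i := by
  rcases Nat.eq_zero_or_pos (ν.rowLen i) with h0 | h0
  · omega
  · have h1 : (i, ν.rowLen i - 1) ∈ ν := by rw [mem_iff_lt_rowLen]; omega
    have h2 : (i, ν.rowLen i - 1) ∈ μ := (YoungDiagram.mem_cells _).mp (h h1)
    rw [mem_iff_lt_rowLen] at h2
    omega

lemma colLen_le_iff {μ : YoungDiagram} {i j : ℕ} : μ.colLen j ≤ i ↔ μ.rowLen i ≤ j := by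
  rw [← not_lt, ← mem_iff_lt_colLen, mem_iff_lt_rowLen, not_lt]

lemma lt_colLen_iff {μ : YoungDiagram} {i j : ℕ} : i < μ.colLen j ↔ j < μ.rowLen i := by
  rw [← mem_iff_lt_colLen, mem_iff_lt_rowLen]

lemma le_of_rows {ν μ : YoungDiagram} {L M : List ℕ} (h1 : RowsEq ν L) (h2 : RowsEq μ M)
    (h : ∀ i, L.getD i 0 ≤ M.getD i 0) : ν ≤ μ := by
  intro c hc
  rcases c with ⟨i, j⟩
  rw [mem_iff_lt_rowLen] at hc ⊢
  have := h i
  rw [← h1, ← h2] at this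
  omega

lemma eq_of_rows {ν μ : YoungDiagram} {L : List ℕ} (h1 : RowsEq ν L) (h2 : RowsEq μ L) :
    ν = μ := by
  have : ∀ c : ℕ × ℕ, c ∈ ν ↔ c ∈ μ := by
    rintro ⟨i, j⟩
    rw [mem_iff_lt_rowLen, mem_iff_lt_rowLen, h1 i, h2 i]
  ext c
  rw [YoungDiagram.mem_cells, YoungDiagram.mem_cells]
  exact this c

lemma rowsEq_ofRowLens {L : List ℕ} (hw : L.SortedGE) :
    RowsEq (ofRowLens L hw) L := by
  intro i
  by_cases h : i < L.length
  · rw [rowLen_ofRowLens ⟨i, h⟩]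
    exact (List.getD_eq_getElem L 0 h).symm
  · rw [List.getD_eq_default L 0 (by omega)]
    by_contra hne
    have : (i, 0) ∈ ofRowLens L hw := by rw [mem_iff_lt_rowLen]; omega
    rw [mem_ofRowLens] at this
    exact h this.1

lemma card_cellsOfRowLens (L : List ℕ) : (YoungDiagram.cellsOfRowLens L).card = L.sum := by
  induction L with
  | nil => simp [YoungDiagram.cellsOfRowLens]
  | cons a t ih =>
    rw [YoungDiagram.cellsOfRowLens, Finset.card_union_of_disjoint, Finset.card_map, ih]
    · simp [Finset.card_product]
    · rw [Finset.disjoint_left]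
      rintro ⟨i, j⟩ hm hm'
      simp only [Finset.mem_product, Finset.mem_singleton] at hm
      rcases Finset.mem_map.mp hm' with ⟨⟨i', j'⟩, _, he⟩
      simp [Function.Embedding.prodMap] at he
      omega

lemma card_of_rows {μ : YoungDiagram} {L : List ℕ} (hw : L.SortedGE) (h : RowsEq μ L) :
    μ.card = L.sum := by
  have : μ = ofRowLens L hw := eq_of_rows h (rowsEq_ofRowLens hw)
  rw [this]
  exact card_cellsOfRowLens L
end Infra

section Gamma

lemma mem_gamma_two {ν : YoungDiagram} {ℓ a b : ℕ} (h : RowsEq ν [a, b])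
    (hs : a + b ≤ ℓ - 2) : ν ∈ GammaSet ℓ := by
  left
  constructor
  · have c0 : ν.colLen 0 ≤ 2 := colLen_le_iff.mpr (by rw [h 2]; simp)
    have c1 : ν.colLen 1 ≤ 2 := colLen_le_iff.mpr (by rw [h 2]; simp)
    omega
  · rw [h 0, h 1]; simpa using hs

lemma mem_gamma_hook {ν : YoungDiagram} {ℓ a : ℕ} (h : RowsEq ν [a, 1, 1])
    (hs : a + 1 ≤ ℓ - 2) : ν ∈ GammaSet ℓ := by
  left
  constructor
  · have c0 : ν.colLen 0 ≤ 3 := colLen_le_iff.mpr (by rw [h 3]; simp)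
    have c1 : ν.colLen 1 ≤ 1 := colLen_le_iff.mpr (by rw [h 1]; simp)
    omega
  · rw [h 0, h 1]; simpa using hs

lemma gamma_classify {ℓ : ℕ} (hℓ : 6 ≤ ℓ) {μ : YoungDiagram} (h : μ ∈ GammaSet ℓ) :
    (∃ a b, b ≤ a ∧ a + b ≤ ℓ - 2 ∧ RowsEq μ [a, b]) ∨
    (∃ a, 1 ≤ a ∧ a + 1 ≤ ℓ - 2 ∧ RowsEq μ [a, 1, 1]) ∨
    RowsEq μ [1, 1, 1, 1] ∨ RowsEq μ [ℓ - 2, 1, 1] := by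
  rcases h with ⟨hc, hr⟩ | h
  · have hba : μ.rowLen 1 ≤ μ.rowLen 0 := μ.rowLen_anti 0 1 (by omega)
    have hcb : μ.rowLen 2 ≤ μ.rowLen 1 := μ.rowLen_anti 1 2 (by omega)
    have hdc : μ.rowLen 3 ≤ μ.rowLen 2 := μ.rowLen_anti 2 3 (by omega)
    have h4 : μ.rowLen 4 = 0 := by
      by_contra h4
      have h5 : 4 < μ.colLen 0 := lt_colLen_iff.mpr (by omega)
      omega
    have hvan : ∀ i, 4 ≤ i → μ.rowLen i = 0 := fun i hi =>
      Nat.le_zero.mp (h4 ▸ μ.rowLen_anti 4 i hi)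
    have hc2 : μ.rowLen 2 ≤ 1 := by
      by_contra hcc
      have h1 : 2 < μ.colLen 1 := lt_colLen_iff.mpr (by omega)
      have h0 : 2 < μ.colLen 0 := lt_colLen_iff.mpr (by omega)
      omega
    by_cases hd : μ.rowLen 3 = 0
    · by_cases hcz : μ.rowLen 2 = 0
      · left
        refine ⟨μ.rowLen 0, μ.rowLen 1, hba, hr, fun i => ?_⟩
        match i with
        | 0 => simp
        | 1 => simp
        | (n + 2) =>
          have : μ.rowLen (n + 2) ≤ μ.rowLen 2 := μ.rowLen_anti 2 (n+2) (by omega)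
          simp [List.getD]
          omega
      · -- rowLen 2 = 1
        have hb1 : μ.rowLen 1 ≤ 1 := by
          have h0 : 2 < μ.colLen 0 := lt_colLen_iff.mpr (by omega)
          have : μ.colLen 1 ≤ 1 := by omega
          exact colLen_le_iff.mp this
        right; left
        refine ⟨μ.rowLen 0, by omega, by omega, fun i => ?_⟩
        match i with
        | 0 => simp
        | 1 => simp [List.getD]; omega
        | 2 => simp [List.getD]; omega
        | (n + 3) =>
          have h3 : μ.rowLen (n + 3) ≤ μ.rowLen 3 := μ.rowLen_anti 3 (n+3) (by omega)
          simp [List.getD]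
          omega
    · -- rowLen 3 ≥ 1, so 4 rows, all length 1
      have h0 : 3 < μ.colLen 0 := lt_colLen_iff.mpr (by omega)
      have h1 : μ.colLen 1 = 0 := by omega
      have ha1 : μ.rowLen 0 ≤ 1 := colLen_le_iff.mp (by omega)
      right; right; left
      intro i
      match i with
      | 0 => simp [List.getD]; omega
      | 1 => simp [List.getD]; omega
      | 2 => simp [List.getD]; omega
      | 3 => simp [List.getD]; omega
      | (n + 4) =>
        have := hvan (n + 4) (by omega)
        simp [List.getD]
        omega
  · right; right; right; exact h

end Gamma

section Pred

lemma mem_pred_removal {ℓ m : ℕ} {l ν : YoungDiagram} (hν : ν ∈ GammaSet ℓ) (hle : ν ≤ l)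
    (hc : l.card = ν.card + 1) (hlm : l.card ≤ m) (he : Even (m - l.card)) :
    ν ∈ PredSet ℓ m l := by
  obtain ⟨k, hk⟩ := he
  exact ⟨hν, Or.inl ⟨hle, hc⟩, by omega, ⟨k, by omega⟩⟩

lemma mem_pred_addition {ℓ m : ℕ} {l ν : YoungDiagram} (hν : ν ∈ GammaSet ℓ) (hle : l ≤ ν)
    (hc : ν.card = l.card + 1) (hcm : l.card + 2 ≤ m) (he : Even (m - l.card)) :
    ν ∈ PredSet ℓ m l := by
  obtain ⟨k, hk⟩ := he
  exact ⟨hν, Or.inr ⟨hle, hc⟩, by omega, ⟨k - 1, by omega⟩⟩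

lemma not_mem_pred_card {ℓ m : ℕ} {u ν : YoungDiagram} (h1 : ν.card + 1 ≠ u.card)
    (h2 : ν.card ≠ u.card + 1) : ν ∉ PredSet ℓ m u := by
  rintro ⟨-, hadj, -, -⟩
  rcases hadj with ⟨-, hc⟩ | ⟨-, hc⟩ <;> omega

lemma not_mem_pred_row {ℓ m : ℕ} {u ν : YoungDiagram} (i : ℕ) (h : u.rowLen i < ν.rowLen i)
    (h2 : ν.card ≠ u.card + 1) : ν ∉ PredSet ℓ m u := by
  rintro ⟨-, hadj, -, -⟩
  rcases hadj with ⟨hle, -⟩ | ⟨-, hc⟩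
  · exact absurd (rowLen_mono hle i) (by omega)
  · omega

lemma not_mem_pred_row' {ℓ m : ℕ} {u ν : YoungDiagram} (i : ℕ) (h : ν.rowLen i < u.rowLen i)
    (h1 : ν.card + 1 ≠ u.card) : ν ∉ PredSet ℓ m u := by
  rintro ⟨-, hadj, -, -⟩
  rcases hadj with ⟨-, hc⟩ | ⟨hle, -⟩
  · omega
  · exact absurd (rowLen_mono hle i) (by omega)

lemma pred_ne {ℓ m : ℕ} {l u ν : YoungDiagram} (h1 : ν ∈ PredSet ℓ m l)
    (h2 : ν ∉ PredSet ℓ m u) : PredSet ℓ m l ≠ PredSet ℓ m u := fun h => h2 (h ▸ h1)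

lemma exists_removal {ℓ : ℕ} (hℓ : 6 ≤ ℓ) {l : YoungDiagram} (hl : l ∈ GammaSet ℓ)
    (hc : 1 ≤ l.card) : ∃ ν ∈ GammaSet ℓ, ν ≤ l ∧ l.card = ν.card + 1 := by
  rcases gamma_classify hℓ hl with ⟨a, b, hba, hs, hrow⟩ | ⟨a, ha, hs, hrow⟩ | hrow | hrow
  · have hlc : l.card = a + b := by rw [card_of_rows (by simp [List.sortedGE_iff_pairwise, List.pairwise_cons]; try omega) hrow]; simp
    by_cases hb : 1 ≤ b
    · have hw : ([a, b - 1] : List ℕ).SortedGE := by simp [List.sortedGE_iff_pairwise, List.pairwise_cons]; try omega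
      refine ⟨ofRowLens _ hw, mem_gamma_two (rowsEq_ofRowLens hw) (by omega),
        le_of_rows (rowsEq_ofRowLens hw) hrow ?_, ?_⟩
      · intro i; rcases i with _ | _ | i <;> simp [List.getD] <;> omega
      · rw [card_of_rows hw (rowsEq_ofRowLens hw)]; simp; try omega
    · have hw : ([a - 1, 0] : List ℕ).SortedGE := by simp [List.sortedGE_iff_pairwise, List.pairwise_cons]
      refine ⟨ofRowLens _ hw, mem_gamma_two (rowsEq_ofRowLens hw) (by omega),
        le_of_rows (rowsEq_ofRowLens hw) hrow ?_, ?_⟩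
      · intro i; rcases i with _ | _ | i <;> simp [List.getD] <;> omega
      · rw [card_of_rows hw (rowsEq_ofRowLens hw)]; simp; try omega
  · -- hook [a,1,1]
    have hlc : l.card = a + 2 := by
      rw [card_of_rows (by simp [List.sortedGE_iff_pairwise, List.pairwise_cons]; try omega) hrow]; simp; try omega
    by_cases ha2 : 2 ≤ a
    · have hw : ([a - 1, 1, 1] : List ℕ).SortedGE := by simp [List.sortedGE_iff_pairwise, List.pairwise_cons]; try omega
      refine ⟨ofRowLens _ hw, mem_gamma_hook (rowsEq_ofRowLens hw) (by omega),
        le_of_rows (rowsEq_ofRowLens hw) hrow ?_, ?_⟩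
      · intro i; rcases i with _ | _ | _ | i <;> simp [List.getD] <;> omega
      · rw [card_of_rows hw (rowsEq_ofRowLens hw)]; simp; try omega
    · have hw : ([1, 1] : List ℕ).SortedGE := by simp [List.sortedGE_iff_pairwise, List.pairwise_cons]
      refine ⟨ofRowLens _ hw, mem_gamma_two (rowsEq_ofRowLens hw) (by omega),
        le_of_rows (rowsEq_ofRowLens hw) hrow ?_, ?_⟩
      · intro i; rcases i with _ | _ | _ | i <;> simp [List.getD] <;> omega
      · rw [card_of_rows hw (rowsEq_ofRowLens hw)]; simp; try omega
  · -- column [1,1,1,1]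
    have hlc : l.card = 4 := by
      rw [card_of_rows (by simp [List.sortedGE_iff_pairwise, List.pairwise_cons]) hrow]; simp
    have hw : ([1, 1, 1] : List ℕ).SortedGE := by simp [List.sortedGE_iff_pairwise, List.pairwise_cons]
    refine ⟨ofRowLens _ hw, mem_gamma_hook (rowsEq_ofRowLens hw) (by omega),
      le_of_rows (rowsEq_ofRowLens hw) hrow ?_, ?_⟩
    · intro i; rcases i with _ | _ | _ | _ | i <;> simp [List.getD] <;> omega
    · rw [card_of_rows hw (rowsEq_ofRowLens hw)]; simp; try omega
  · -- [ℓ-2,1,1]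
    have hlc : l.card = ℓ := by
      rw [card_of_rows (by simp [List.sortedGE_iff_pairwise, List.pairwise_cons]; try omega) hrow]; simp; try omega
    have hw : ([ℓ - 3, 1, 1] : List ℕ).SortedGE := by simp [List.sortedGE_iff_pairwise, List.pairwise_cons]; try omega
    refine ⟨ofRowLens _ hw, mem_gamma_hook (rowsEq_ofRowLens hw) (by omega),
      le_of_rows (rowsEq_ofRowLens hw) hrow ?_, ?_⟩
    · intro i; rcases i with _ | _ | _ | i <;> simp [List.getD] <;> omega
    · rw [card_of_rows hw (rowsEq_ofRowLens hw)]; simp; try omega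

end Pred

section Cards
lemma card_two {v : YoungDiagram} {a b : ℕ} (hba : b ≤ a) (h : RowsEq v [a, b]) :
    v.card = a + b := by
  rw [card_of_rows (by simp [List.sortedGE_iff_pairwise, List.pairwise_cons]; omega) h]; simp
lemma card_hook {v : YoungDiagram} {a : ℕ} (ha : 1 ≤ a) (h : RowsEq v [a, 1, 1]) :
    v.card = a + 2 := by
  rw [card_of_rows (by simp [List.sortedGE_iff_pairwise, List.pairwise_cons]; omega) h]; simp
lemma card_col4 {v : YoungDiagram} (h : RowsEq v [1, 1, 1, 1]) : v.card = 4 := by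
  rw [card_of_rows (by simp [List.sortedGE_iff_pairwise, List.pairwise_cons]) h]; simp
lemma card_D {v : YoungDiagram} {ℓ : ℕ} (hℓ : 6 ≤ ℓ) (h : RowsEq v [ℓ - 2, 1, 1]) :
    v.card = ℓ := by
  rw [card_of_rows (by simp [List.sortedGE_iff_pairwise, List.pairwise_cons]; omega) h]; simp; omega
end Cards

section CaseLemmas

lemma case_AA {ℓ m : ℕ} (hℓ : 6 ≤ ℓ) (hm : 3 ≤ m) {l u : YoungDiagram}
    (a b c d : ℕ) (hba : b ≤ a) (hdc : d ≤ c) (hsl : a + b ≤ ℓ - 2) (hsu : c + d ≤ ℓ - 2)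
    (hl : RowsEq l [a, b]) (hu : RowsEq u [c, d]) (hcard : a + b = c + d) (hlt : c < a)
    (hlm : l.card ≤ m) (hle : Even (m - l.card))
    (hum : u.card ≤ m) (hue : Even (m - u.card)) :
    PredSet ℓ m l ≠ PredSet ℓ m u := by
  have hlc : l.card = a + b := card_two hba hl
  have huc : u.card = c + d := card_two hdc hu
  have hu0 : u.rowLen 0 = c := by have := hu 0; simpa using this
  have hl1 : l.rowLen 1 = b := by have := hl 1; simpa using this
  by_cases hb : 1 ≤ b
  · have hw : ([a, b - 1] : List ℕ).SortedGE := by simp [List.sortedGE_iff_pairwise, List.pairwise_cons]; omega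
    have hν := rowsEq_ofRowLens hw
    have hνc : (ofRowLens _ hw).card = a + (b - 1) := card_two (by omega) hν
    refine pred_ne (mem_pred_removal (mem_gamma_two hν (by omega))
      (le_of_rows hν hl ?_) (by omega) hlm hle) (not_mem_pred_row 0 ?_ (by omega))
    · intro i; rcases i with _ | _ | i <;> simp [List.getD] <;> omega
    · rw [hu0, hν 0]; simp; omega
  · have hd1 : 1 ≤ d := by omega
    by_cases hd2 : 2 ≤ d
    · have hw : ([a - 1, 0] : List ℕ).SortedGE := by simp [List.sortedGE_iff_pairwise, List.pairwise_cons]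
      have hν := rowsEq_ofRowLens hw
      have hνc : (ofRowLens _ hw).card = a - 1 := by
        have := card_two (by omega) hν; omega
      refine pred_ne (mem_pred_removal (mem_gamma_two hν (by omega))
        (le_of_rows hν hl ?_) (by omega) hlm hle) (not_mem_pred_row 0 ?_ (by omega))
      · intro i; rcases i with _ | _ | i <;> simp [List.getD] <;> omega
      · rw [hu0, hν 0]; simp; omega
    · have hd : d = 1 := by omega
      by_cases hc2 : 2 ≤ c
      · have hw : ([c - 1, 1] : List ℕ).SortedGE := by simp [List.sortedGE_iff_pairwise, List.pairwise_cons]; omega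
        have hν := rowsEq_ofRowLens hw
        have hνc : (ofRowLens _ hw).card = c := by
          have := card_two (by omega) hν; omega
        refine (pred_ne (mem_pred_removal (mem_gamma_two hν (by omega))
          (le_of_rows hν hu ?_) (by omega) hum hue) (not_mem_pred_row 1 ?_ (by omega))).symm
        · intro i; rcases i with _ | _ | i <;> simp [List.getD] <;> omega
        · rw [hl1, hν 1]; simp; omega
      · -- l = [2], u = [1,1]
        have hc1 : c = 1 := by omega
        have ha2 : a = 2 := by omega
        have hm4 : 4 ≤ m := by obtain ⟨k, hk⟩ := hle; omega
        have hw : ([3, 0] : List ℕ).SortedGE := by simp [List.sortedGE_iff_pairwise, List.pairwise_cons]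
        have hν := rowsEq_ofRowLens hw
        have hνc : (ofRowLens _ hw).card = 3 := by
          have := card_two (by omega) hν; omega
        refine pred_ne (mem_pred_addition (mem_gamma_two hν (by omega))
          (le_of_rows hl hν ?_) (by omega) (by omega) hle) (not_mem_pred_row' 1 ?_ (by omega))
        · intro i; rcases i with _ | _ | i <;> simp [List.getD] <;> omega
        · have hu1 : u.rowLen 1 = d := by have := hu 1; simpa using this
          rw [hu1, hν 1]; simp; omega

lemma case_AB {ℓ m : ℕ} (hℓ : 6 ≤ ℓ) (hm : 3 ≤ m) {l u : YoungDiagram}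
    (a b c : ℕ) (hba : b ≤ a) (hsl : a + b ≤ ℓ - 2) (hc1 : 1 ≤ c) (hsu : c + 1 ≤ ℓ - 2)
    (hl : RowsEq l [a, b]) (hu : RowsEq u [c, 1, 1]) (hcard : a + b = c + 2)
    (hlm : l.card ≤ m) (hle : Even (m - l.card))
    (hum : u.card ≤ m) (hue : Even (m - u.card)) :
    PredSet ℓ m l ≠ PredSet ℓ m u := by
  have hlc : l.card = a + b := card_two hba hl
  have huc : u.card = c + 2 := card_hook hc1 hu
  have hl2 : l.rowLen 2 = 0 := by have := hl 2; simpa using this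
  have hu0 : u.rowLen 0 = c := by have := hu 0; simpa using this
  by_cases hc2 : 2 ≤ c
  · have hw : ([c - 1, 1, 1] : List ℕ).SortedGE := by simp [List.sortedGE_iff_pairwise, List.pairwise_cons]; omega
    have hν := rowsEq_ofRowLens hw
    have hνc : (ofRowLens _ hw).card = c + 1 := by
      have := card_hook (by omega) hν; omega
    refine (pred_ne (mem_pred_removal (mem_gamma_hook hν (by omega))
      (le_of_rows hν hu ?_) (by omega) hum hue) (not_mem_pred_row 2 ?_ (by omega))).symm
    · intro i; rcases i with _ | _ | _ | i <;> simp [List.getD] <;> omega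
    · rw [hl2, hν 2]; simp
  · have hc1' : c = 1 := by omega
    have ha2 : 2 ≤ a := by omega
    have hw : ([2, 0] : List ℕ).SortedGE := by simp [List.sortedGE_iff_pairwise, List.pairwise_cons]
    have hν := rowsEq_ofRowLens hw
    have hνc : (ofRowLens _ hw).card = 2 := by
      have := card_two (by omega) hν; omega
    refine pred_ne (mem_pred_removal (mem_gamma_two hν (by omega))
      (le_of_rows hν hl ?_) (by omega) hlm hle) (not_mem_pred_row 0 ?_ (by omega))
    · intro i; rcases i with _ | _ | i <;> simp [List.getD] <;> omega
    · rw [hu0, hν 0]; simp; omega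

lemma case_AC {ℓ m : ℕ} (hℓ : 6 ≤ ℓ) (hm : 3 ≤ m) {l u : YoungDiagram}
    (a b : ℕ) (hba : b ≤ a) (hsl : a + b ≤ ℓ - 2)
    (hl : RowsEq l [a, b]) (hu : RowsEq u [1, 1, 1, 1]) (hcard : a + b = 4)
    (hum : u.card ≤ m) (hue : Even (m - u.card)) :
    PredSet ℓ m l ≠ PredSet ℓ m u := by
  have hlc : l.card = a + b := card_two hba hl
  have huc : u.card = 4 := card_col4 hu
  have hl2 : l.rowLen 2 = 0 := by have := hl 2; simpa using this
  have hw : ([1, 1, 1] : List ℕ).SortedGE := by simp [List.sortedGE_iff_pairwise, List.pairwise_cons]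
  have hν := rowsEq_ofRowLens hw
  have hνc : (ofRowLens _ hw).card = 3 := by
    have := card_hook (by omega) hν; omega
  refine (pred_ne (mem_pred_removal (mem_gamma_hook hν (by omega))
    (le_of_rows hν hu ?_) (by omega) hum hue) (not_mem_pred_row 2 ?_ (by omega))).symm
  · intro i; rcases i with _ | _ | _ | _ | i <;> simp [List.getD]
  · rw [hl2, hν 2]; simp

lemma case_BC {ℓ m : ℕ} (hℓ : 6 ≤ ℓ) (hm : 3 ≤ m) {l u : YoungDiagram}
    (a : ℕ) (ha : 1 ≤ a) (hsl : a + 1 ≤ ℓ - 2)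
    (hl : RowsEq l [a, 1, 1]) (hu : RowsEq u [1, 1, 1, 1]) (hcard : a + 2 = 4)
    (hlm : l.card ≤ m) (hle : Even (m - l.card)) :
    PredSet ℓ m l ≠ PredSet ℓ m u := by
  have hlc : l.card = a + 2 := card_hook ha hl
  have huc : u.card = 4 := card_col4 hu
  have hu0 : u.rowLen 0 = 1 := by have := hu 0; simpa using this
  have hw : ([a, 1] : List ℕ).SortedGE := by simp [List.sortedGE_iff_pairwise, List.pairwise_cons]; omega
  have hν := rowsEq_ofRowLens hw
  have hνc : (ofRowLens _ hw).card = a + 1 := card_two (by omega) hν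
  refine pred_ne (mem_pred_removal (mem_gamma_two hν (by omega))
    (le_of_rows hν hl ?_) (by omega) hlm hle) (not_mem_pred_row 0 ?_ (by omega))
  · intro i; rcases i with _ | _ | _ | i <;> simp [List.getD] <;> omega
  · rw [hu0, hν 0]; simp; omega

lemma case_unequal {ℓ m : ℕ} (hℓ : 6 ≤ ℓ) (hm : 3 ≤ m) {l u : YoungDiagram}
    (hlΓ : l ∈ GammaSet ℓ) (huΓ : u ∈ GammaSet ℓ)
    (hlm : l.card ≤ m) (hle : Even (m - l.card))
    (hum : u.card ≤ m) (hue : Even (m - u.card))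
    (hlt : l.card < u.card) :
    PredSet ℓ m l ≠ PredSet ℓ m u := by
  have h2 : l.card + 2 ≤ u.card := by
    obtain ⟨k1, hk1⟩ := hle; obtain ⟨k2, hk2⟩ := hue; omega
  by_cases h1 : 1 ≤ l.card
  · obtain ⟨ν, hνΓ, hνle, hνc⟩ := exists_removal hℓ hlΓ h1
    exact pred_ne (mem_pred_removal hνΓ hνle hνc hlm hle)
      (not_mem_pred_card (by omega) (by omega))
  · by_cases h4 : 4 ≤ u.card
    · obtain ⟨ν, hνΓ, hνle, hνc⟩ := exists_removal hℓ huΓ (by omega)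
      exact (pred_ne (mem_pred_removal hνΓ hνle hνc hum hue)
        (not_mem_pred_card (by omega) (by omega))).symm
    · have hu2 : u.card = 2 := by obtain ⟨k1, hk1⟩ := hle; obtain ⟨k2, hk2⟩ := hue; omega
      rcases gamma_classify hℓ huΓ with ⟨c, d, hdc, hsu, hu⟩ | ⟨c, hc1, hsu, hu⟩ | hu | hu
      · have huc : u.card = c + d := card_two hdc hu
        have hm4 : 4 ≤ m := by obtain ⟨k, hk⟩ := hue; omega
        have hw : ([2, 1] : List ℕ).SortedGE := by simp [List.sortedGE_iff_pairwise, List.pairwise_cons]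
        have hν := rowsEq_ofRowLens hw
        have hνc : (ofRowLens _ hw).card = 3 := card_two (by omega) hν
        refine (pred_ne (mem_pred_addition (mem_gamma_two hν (by omega))
          (le_of_rows hu hν ?_) (by omega) (by omega) hue)
          (not_mem_pred_card (by omega) (by omega))).symm
        intro i; rcases i with _ | _ | i <;> simp [List.getD] <;> omega
      · have := card_hook hc1 hu; omega
      · have := card_col4 hu; omega
      · have := card_D hℓ hu; omega

end CaseLemmas

end Helpers

/-- Lemma 2.3: for `m ≥ 3` and `λ ≠ μ` in `Γ(ℓ)` with `m - |λ|` and `m - |μ|`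
nonnegative even integers, the predecessor sets `P(m,λ)` and `P(m,μ)` differ. -/
theorem predecessor_sets_distinguish (ℓ m : ℕ) (hℓ : 6 ≤ ℓ) (hm : 3 ≤ m)
    (l u : YoungDiagram) (hlΓ : l ∈ GammaSet ℓ) (huΓ : u ∈ GammaSet ℓ)
    (hlm : l.card ≤ m) (hle : Even (m - l.card))
    (hum : u.card ≤ m) (hue : Even (m - u.card))
    (hne : l ≠ u) :
    PredSet ℓ m l ≠ PredSet ℓ m u := by
  rcases Nat.lt_trichotomy l.card u.card with hlt | hcc | hlt
  · exact case_unequal hℓ hm hlΓ huΓ hlm hle hum hue hlt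
  swap
  · exact (case_unequal hℓ hm huΓ hlΓ hum hue hlm hle hlt).symm
  rcases gamma_classify hℓ hlΓ with ⟨a, b, hba, hsl, hl⟩ | ⟨a, ha1, hsl, hl⟩ | hl | hl <;>
    rcases gamma_classify hℓ huΓ with ⟨c, d, hdc, hsu, hu⟩ | ⟨c, hc1, hsu, hu⟩ | hu | hu
  · -- AA
    have hlc : l.card = a + b := card_two hba hl
    have huc : u.card = c + d := card_two hdc hu
    by_cases hac : a = c
    · have hbd : b = d := by omega
      subst hac; subst hbd
      exact absurd (eq_of_rows hl hu) hne
    · rcases Nat.lt_or_ge c a with h | h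
      · exact case_AA hℓ hm a b c d hba hdc hsl hsu hl hu (by omega) h hlm hle hum hue
      · exact (case_AA hℓ hm c d a b hdc hba hsu hsl hu hl (by omega) (by omega)
          hum hue hlm hle).symm
  · -- AB
    have hlc : l.card = a + b := card_two hba hl
    have huc : u.card = c + 2 := card_hook hc1 hu
    exact case_AB hℓ hm a b c hba hsl hc1 hsu hl hu (by omega) hlm hle hum hue
  · -- AC
    have hlc : l.card = a + b := card_two hba hl
    have huc : u.card = 4 := card_col4 hu
    exact case_AC hℓ hm a b hba hsl hl hu (by omega) hum hue
  · -- AD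
    have hlc : l.card = a + b := card_two hba hl
    have huc : u.card = ℓ := card_D hℓ hu
    exact absurd hcc (by omega)
  · -- BA
    have hlc : l.card = a + 2 := card_hook ha1 hl
    have huc : u.card = c + d := card_two hdc hu
    exact (case_AB hℓ hm c d a hdc hsu ha1 hsl hu hl (by omega) hum hue hlm hle).symm
  · -- BB
    have hlc : l.card = a + 2 := card_hook ha1 hl
    have huc : u.card = c + 2 := card_hook hc1 hu
    have hac : a = c := by omega
    subst hac
    exact absurd (eq_of_rows hl hu) hne
  · -- BC
    have hlc : l.card = a + 2 := card_hook ha1 hl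
    have huc : u.card = 4 := card_col4 hu
    exact case_BC hℓ hm a ha1 hsl hl hu (by omega) hlm hle
  · -- BD
    have hlc : l.card = a + 2 := card_hook ha1 hl
    have huc : u.card = ℓ := card_D hℓ hu
    exact absurd hcc (by omega)
  · -- CA
    have hlc : l.card = 4 := card_col4 hl
    have huc : u.card = c + d := card_two hdc hu
    exact (case_AC hℓ hm c d hdc hsu hu hl (by omega) hlm hle).symm
  · -- CB
    have hlc : l.card = 4 := card_col4 hl
    have huc : u.card = c + 2 := card_hook hc1 hu
    exact (case_BC hℓ hm c hc1 hsu hu hl (by omega) hum hue).symm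
  · -- CC
    exact absurd (eq_of_rows hl hu) hne
  · -- CD
    have hlc : l.card = 4 := card_col4 hl
    have huc : u.card = ℓ := card_D hℓ hu
    exact absurd hcc (by omega)
  · -- DA
    have hlc : l.card = ℓ := card_D hℓ hl
    have huc : u.card = c + d := card_two hdc hu
    exact absurd hcc (by omega)
  · -- DB
    have hlc : l.card = ℓ := card_D hℓ hl
    have huc : u.card = c + 2 := card_hook hc1 hu
    exact absurd hcc (by omega)
  · -- DC
    have hlc : l.card = ℓ := card_D hℓ hl
    have huc : u.card = 4 := card_col4 hu
    exact absurd hcc (by omega)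
  · -- DD
    exact absurd (eq_of_rows hl hu) hne
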